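/- Let s ≥ 2 be an integer and let g : ℝ → ℝ satisfy: for every admissible digit sequence a, g(∑_{n=0}^∞ a n / s^{n+1}) = ∑_{n=0}^∞ (−1)^{n+1} a n / s^{n+1}. Then g is nowhere differentiable on [0,1): for every x ∈ [0,1), g is not differentiable at x. (Paper's Theorem 2 for the function f₊.) -/

import Mathlib

/-- n-th digit of the s-adic expansion of x. -/
noncomputable def sDigit (s : ℕ) (x : ℝ) (n : ℕ) : ℕ := ⌊x * (s:ℝ)^(n+1)⌋₊ - s * ⌊x * (s:ℝ)^n⌋₊

lemma sFloor_bounds (s : ℕ) (hs : 2 ≤ s) (x : ℝ) (hx : 0 ≤ x) (n : ℕ) :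
    s * ⌊x * (s:ℝ)^n⌋₊ ≤ ⌊x * (s:ℝ)^(n+1)⌋₊ ∧
      ⌊x * (s:ℝ)^(n+1)⌋₊ < s * ⌊x * (s:ℝ)^n⌋₊ + s := by
  have hs0 : (0:ℝ) < (s:ℝ) := by positivity
  have hnn : 0 ≤ x * (s:ℝ)^(n+1) := by positivity
  constructor
  · rw [Nat.le_floor_iff hnn]
    push_cast
    calc ((s:ℝ)) * ⌊x * (s:ℝ)^n⌋₊ ≤ s * (x * s^n) := by
          have := Nat.floor_le (by positivity : 0 ≤ x * (s:ℝ)^n)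
          nlinarith
      _ = x * s^(n+1) := by ring
  · rw [Nat.floor_lt hnn]
    push_cast
    have h1 : x * (s:ℝ)^n < ⌊x * (s:ℝ)^n⌋₊ + 1 := Nat.lt_floor_add_one _
    calc x * (s:ℝ)^(n+1) = s * (x * s^n) := by ring
      _ < s * (⌊x * (s:ℝ)^n⌋₊ + 1) := by nlinarith
      _ = s * ⌊x * (s:ℝ)^n⌋₊ + s := by ring

lemma sDigit_le (s : ℕ) (hs : 2 ≤ s) (x : ℝ) (hx : 0 ≤ x) (n : ℕ) :
    sDigit s x n ≤ s - 1 := by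
  have h := sFloor_bounds s hs x hx n
  unfold sDigit
  omega

lemma sDigit_cast (s : ℕ) (hs : 2 ≤ s) (x : ℝ) (hx : 0 ≤ x) (n : ℕ) :
    (sDigit s x n : ℝ) = (⌊x * (s:ℝ)^(n+1)⌋₊ : ℝ) - s * ⌊x * (s:ℝ)^n⌋₊ := by
  have h := (sFloor_bounds s hs x hx n).1
  unfold sDigit
  push_cast [Nat.cast_sub h]
  ring



lemma sDigit_sum (s : ℕ) (hs : 2 ≤ s) (x : ℝ) (hx : 0 ≤ x) (hx1 : x < 1) (N : ℕ) :
    ∑ n ∈ Finset.range N, (sDigit s x n : ℝ) / (s:ℝ)^(n+1) = (⌊x * (s:ℝ)^N⌋₊ : ℝ) / (s:ℝ)^N := by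
  have hs0 : (0:ℝ) < (s:ℝ) := by positivity
  induction N with
  | zero => simp [Nat.floor_eq_zero.2 (by simpa using hx1)]
  | succ N ih =>
      rw [Finset.sum_range_succ, ih, sDigit_cast s hs x hx N]
      have h1 : ((s:ℝ))^N ≠ 0 := by positivity
      have h2 : ((s:ℝ))^(N+1) ≠ 0 := by positivity
      field_simp
      ring

-- summability of general digit series
lemma digit_summable (s : ℕ) (hs : 2 ≤ s) (a : ℕ → ℕ) (ha : ∀ n, a n ≤ s - 1) :
    Summable (fun n => (a n : ℝ) / (s:ℝ)^(n+1)) := by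
  have hs0 : (0:ℝ) < (s:ℝ) := by positivity
  have hr : (1:ℝ)/s < 1 := by
    rw [div_lt_one hs0]
    have : (2:ℝ) ≤ s := by exact_mod_cast hs
    linarith
  have hg : Summable (fun n : ℕ => ((1:ℝ)/s)^n) :=
    summable_geometric_of_lt_one (by positivity) hr
  have hle : ∀ n : ℕ, (a n : ℝ) / (s:ℝ)^(n+1) ≤ ((1:ℝ)/s)^n := by
    intro n
    have h1 : (a n : ℝ) ≤ (s:ℝ) := by
      have h := (ha n).trans (Nat.sub_le s 1)
      exact_mod_cast h
    rw [div_pow, one_pow, div_le_div_iff₀ (by positivity) (by positivity)]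
    calc (a n : ℝ) * (s:ℝ)^n ≤ (s:ℝ) * (s:ℝ)^n := by nlinarith [pow_pos hs0 n]
      _ = 1 * (s:ℝ)^(n+1) := by ring
  exact Summable.of_nonneg_of_le (fun n => by positivity) hle hg

lemma alt_summable (s : ℕ) (hs : 2 ≤ s) (a : ℕ → ℕ) (ha : ∀ n, a n ≤ s - 1) :
    Summable (fun n => (-1:ℝ)^(n+1) * (a n : ℝ) / (s:ℝ)^(n+1)) := by
  apply Summable.of_abs
  have := digit_summable s hs a ha
  convert this using 1
  · rfl
  funext n
  have hs0 : (0:ℝ) < (s:ℝ) := by positivity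
  rw [abs_div, abs_mul, abs_pow, abs_neg, abs_one, one_pow, one_mul,
    abs_of_nonneg (by positivity : (0:ℝ) ≤ (a n:ℝ)), abs_of_nonneg (by positivity : (0:ℝ) ≤ (s:ℝ)^(n+1))]

lemma sDigit_hasSum (s : ℕ) (hs : 2 ≤ s) (x : ℝ) (hx : 0 ≤ x) (hx1 : x < 1) :
    HasSum (fun n => (sDigit s x n : ℝ) / (s:ℝ)^(n+1)) x := by
  have hs0 : (0:ℝ) < (s:ℝ) := by positivity
  have hsum := digit_summable s hs (sDigit s x) (sDigit_le s hs x hx)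
  rw [hsum.hasSum_iff_tendsto_nat]
  have key : ∀ N, |∑ n ∈ Finset.range N, (sDigit s x n : ℝ) / (s:ℝ)^(n+1) - x| ≤ ((1:ℝ)/s)^N := by
    intro N
    rw [sDigit_sum s hs x hx hx1 N]
    have hpow : (0:ℝ) < (s:ℝ)^N := by positivity
    have h1 : (⌊x * (s:ℝ)^N⌋₊ : ℝ) ≤ x * (s:ℝ)^N := Nat.floor_le (by positivity)
    have h2 : x * (s:ℝ)^N < ⌊x * (s:ℝ)^N⌋₊ + 1 := Nat.lt_floor_add_one _
    have hp : (0:ℝ) < 1/(s:ℝ)^N := by positivity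
    have hA : (⌊x * (s:ℝ)^N⌋₊ : ℝ)/(s:ℝ)^N ≤ x := by
      rw [div_le_iff₀ hpow]; linarith
    have hB : x - (⌊x * (s:ℝ)^N⌋₊ : ℝ)/(s:ℝ)^N ≤ 1/(s:ℝ)^N := by
      rw [sub_le_iff_le_add, ← add_div, le_div_iff₀ hpow]; linarith
    rw [div_pow, one_pow, abs_le]
    constructor <;> linarith
  have hlim : Filter.Tendsto (fun N => ((1:ℝ)/s)^N) Filter.atTop (nhds 0) := by
    apply tendsto_pow_atTop_nhds_zero_of_lt_one (by positivity)
    rw [div_lt_one hs0]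
    have : (2:ℝ) ≤ s := by exact_mod_cast hs
    linarith
  have := squeeze_zero_norm (fun N => by rw [Real.norm_eq_abs]; exact key N) hlim
  have h := this.add (tendsto_const_nhds (x := x))
  simpa using h



lemma sDigit_admissible (s : ℕ) (hs : 2 ≤ s) (x : ℝ) (hx : 0 ≤ x) (hx1 : x < 1) :
    ¬ ∃ N, ∀ n ≥ N, sDigit s x n = s - 1 := by
  rintro ⟨N, hN⟩
  have hs0 : (0:ℝ) < (s:ℝ) := by positivity
  have hs1 : (1:ℝ) < (s:ℝ) := by exact_mod_cast by omega
  have hsum := sDigit_hasSum s hs x hx hx1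
  -- tail sum from N
  have htail := (hsum.summable.hasSum_iff_tendsto_nat.mp hsum)
  -- compute x via sum_add_tsum_nat_add
  have hsplit := Summable.sum_add_tsum_nat_add (f := fun n => (sDigit s x n : ℝ) / (s:ℝ)^(n+1)) N (digit_summable s hs (sDigit s x) (sDigit_le s hs x hx))
  rw [hsum.tsum_eq] at hsplit
  -- tail values
  have htval : ∀ n : ℕ, ((sDigit s x (n + N) : ℝ)) / (s:ℝ)^(n + N + 1)
      = ((s:ℝ) - 1) / (s:ℝ)^(N+1) * ((1:ℝ)/s)^n := by
    intro n
    rw [hN (n + N) (by omega)]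
    have hc : ((s - 1 : ℕ) : ℝ) = (s:ℝ) - 1 := by
      have : 1 ≤ s := by omega
      push_cast [this]; ring
    rw [hc]
    rw [div_pow, one_pow]
    rw [div_mul_div_comm]
    congr 1
    · ring
    · rw [← pow_add]; congr 1; omega
  have hgeo : HasSum (fun n : ℕ => ((s:ℝ) - 1) / (s:ℝ)^(N+1) * ((1:ℝ)/s)^n)
      (((s:ℝ) - 1) / (s:ℝ)^(N+1) * (1 - (1:ℝ)/s)⁻¹) := by
    exact (hasSum_geometric_of_lt_one (by positivity) (by rw [div_lt_one hs0]; linarith)).mul_left _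
  have htsum : ∑' n : ℕ, ((sDigit s x (n + N) : ℝ)) / (s:ℝ)^(n + N + 1)
      = ((s:ℝ) - 1) / (s:ℝ)^(N+1) * (1 - (1:ℝ)/s)⁻¹ := by
    rw [tsum_congr htval]
    exact hgeo.tsum_eq
  rw [htsum, sDigit_sum s hs x hx hx1 N] at hsplit
  -- simplify: tail = 1/s^N
  have hval : ((s:ℝ) - 1) / (s:ℝ)^(N+1) * (1 - (1:ℝ)/s)⁻¹ = 1 / (s:ℝ)^N := by
    have hsm : ((s:ℝ) - 1) ≠ 0 := by linarith
    have h1 : (1:ℝ) - 1/s = ((s:ℝ) - 1)/s := by field_simp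
    rw [h1, inv_div, pow_succ]
    field_simp
  rw [hval] at hsplit
  have h2 : x * (s:ℝ)^N < ⌊x * (s:ℝ)^N⌋₊ + 1 := Nat.lt_floor_add_one _
  have hpow : (0:ℝ) < (s:ℝ)^N := by positivity
  rw [← add_div, div_eq_iff (ne_of_gt hpow)] at hsplit
  linarith


/-- Paper's Theorem 2 for the function `f₊`: `f₊` is nowhere differentiable on
`[0,1)`. -/
theorem stmt_15 (s : ℕ) (hs : 2 ≤ s) (g : ℝ → ℝ)
    (hg : ∀ a : ℕ → ℕ, (∀ n, a n ≤ s - 1) → (¬ ∃ N, ∀ n ≥ N, a n = s - 1) →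
      g (∑' n : ℕ, (a n : ℝ) / (s : ℝ) ^ (n + 1)) =
        ∑' n : ℕ, (-1 : ℝ) ^ (n + 1) * (a n : ℝ) / (s : ℝ) ^ (n + 1)) :
    ∀ x ∈ Set.Ico (0 : ℝ) 1, ¬ DifferentiableAt ℝ g x := by
  rintro x ⟨hx0, hx1⟩ hdiff
  have hs0 : (0:ℝ) < (s:ℝ) := by positivity
  have hs1 : (1:ℝ) < (s:ℝ) := by exact_mod_cast by omega
  set a : ℕ → ℕ := sDigit s x with ha_def
  have ha_le : ∀ n, a n ≤ s - 1 := sDigit_le s hs x hx0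
  have ha_adm : ¬ ∃ N, ∀ n ≥ N, a n = s - 1 := sDigit_admissible s hs x hx0 hx1
  have hsum : HasSum (fun n => (a n : ℝ) / (s:ℝ)^(n+1)) x := sDigit_hasSum s hs x hx0 hx1
  have halt : HasSum (fun n => (-1:ℝ)^(n+1) * (a n : ℝ) / (s:ℝ)^(n+1)) (g x) := by
    have h1 := hg a ha_le ha_adm
    rw [hsum.tsum_eq] at h1
    rw [h1]
    exact (alt_summable s hs a ha_le).hasSum
  -- perturbations
  set ε : ℕ → ℝ := fun m => if a m < s - 1 then 1 else -1 with hε_def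
  set a' : ℕ → ℕ → ℕ :=
    fun m k => if k = m then (if a m < s - 1 then a m + 1 else a m - 1) else a k with ha'_def
  have hε_cases : ∀ m, ε m = 1 ∨ ε m = -1 := by
    intro m; by_cases h : a m < s - 1 <;> simp [hε_def, h]
  have hε_abs : ∀ m, |ε m| = 1 := by
    intro m; rcases hε_cases m with h | h <;> rw [h] <;> norm_num
  have key : ∀ m k, ((a' m k : ℝ)) = (a k : ℝ) + (if k = m then ε m else 0) := by
    intro m k
    by_cases hk : k = m
    · subst hk
      by_cases h : a k < s - 1
      · simp only [ha'_def, hε_def, if_pos rfl, if_pos h]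
        push_cast; ring
      · have h1 : 1 ≤ a k := by have := ha_le k; omega
        simp only [ha'_def, hε_def, if_pos rfl, if_neg h]
        push_cast [Nat.cast_sub h1]; ring
    · simp [ha'_def, hk]
  have ha'_le : ∀ m k, a' m k ≤ s - 1 := by
    intro m k
    have hk2 := ha_le k
    have hm2 := ha_le m
    by_cases hk : k = m
    · subst hk
      by_cases h : a k < s - 1 <;> simp [ha'_def, h] <;> omega
    · simpa [ha'_def, hk] using hk2
  have ha'_adm : ∀ m, ¬ ∃ N, ∀ n ≥ N, a' m n = s - 1 := by
    intro m ⟨N, hN⟩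
    apply ha_adm
    refine ⟨max N (m+1), fun n hn => ?_⟩
    have h1 := hN n (le_trans (le_max_left _ _) hn)
    have h2 : n ≠ m := by have := le_trans (le_max_right _ _) hn; omega
    simp only [ha'_def] at h1
    rwa [if_neg h2] at h1
  have hsum' : ∀ m, HasSum (fun k => (a' m k : ℝ) / (s:ℝ)^(k+1)) (x + ε m / (s:ℝ)^(m+1)) := by
    intro m
    have hdec : (fun k => (a' m k : ℝ) / (s:ℝ)^(k+1)) =
        fun k => (a k : ℝ) / (s:ℝ)^(k+1) + (if k = m then ε m / (s:ℝ)^(m+1) else 0) := by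
      funext k
      rw [key m k]
      by_cases hk : k = m
      · subst hk; simp [add_div]
      · simp [hk]
    rw [hdec]
    exact hsum.add (hasSum_ite_eq m (ε m / (s:ℝ)^(m+1)))
  have halt' : ∀ m, HasSum (fun k => (-1:ℝ)^(k+1) * (a' m k : ℝ) / (s:ℝ)^(k+1))
      (g x + (-1:ℝ)^(m+1) * ε m / (s:ℝ)^(m+1)) := by
    intro m
    have hdec : (fun k => (-1:ℝ)^(k+1) * (a' m k : ℝ) / (s:ℝ)^(k+1)) =
        fun k => (-1:ℝ)^(k+1) * (a k : ℝ) / (s:ℝ)^(k+1) +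
          (if k = m then (-1:ℝ)^(m+1) * ε m / (s:ℝ)^(m+1) else 0) := by
      funext k
      rw [key m k]
      by_cases hk : k = m
      · subst hk; simp; ring
      · simp [hk]
    rw [hdec]
    exact halt.add (hasSum_ite_eq m _)
  have hgval : ∀ m, g (x + ε m / (s:ℝ)^(m+1)) = g x + (-1:ℝ)^(m+1) * ε m / (s:ℝ)^(m+1) := by
    intro m
    have h1 := hg (a' m) (ha'_le m) (ha'_adm m)
    rw [(hsum' m).tsum_eq, (halt' m).tsum_eq] at h1
    exact h1
  -- slopes
  set y : ℕ → ℝ := fun m => x + ε m / (s:ℝ)^(m+1) with hy_def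
  have hεne : ∀ m, ε m ≠ 0 := by
    intro m; rcases hε_cases m with h | h <;> rw [h] <;> norm_num
  have hne : ∀ m, y m ≠ x := by
    intro m h
    simp only [hy_def] at h
    have h2 : ε m / (s:ℝ)^(m+1) = 0 := by linarith
    have hp : ((s:ℝ))^(m+1) ≠ 0 := by positivity
    rcases div_eq_zero_iff.mp h2 with h3 | h3
    · exact hεne m h3
    · exact hp h3
  have hslope_eq : ∀ m, slope g x (y m) = (-1:ℝ)^(m+1) := by
    intro m
    have hp : ((s:ℝ))^(m+1) ≠ 0 := by positivity
    simp only [hy_def, slope_def_field]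
    rw [hgval m, add_sub_cancel_left, add_sub_cancel_left, mul_div_assoc,
      mul_div_cancel_right₀ _ (div_ne_zero (hεne m) hp)]
  -- limits
  have hD := hdiff.hasDerivAt
  rw [hasDerivAt_iff_tendsto_slope] at hD
  have h0 : Filter.Tendsto (fun m => ε m / (s:ℝ)^(m+1)) Filter.atTop (nhds 0) := by
    have hlim : Filter.Tendsto (fun m : ℕ => ((1:ℝ)/s)^(m+1)) Filter.atTop (nhds 0) := by
      have h1 : Filter.Tendsto (fun m : ℕ => ((1:ℝ)/s)^m) Filter.atTop (nhds 0) := by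
        apply tendsto_pow_atTop_nhds_zero_of_lt_one (by positivity)
        rw [div_lt_one hs0]; linarith
      exact h1.comp (Filter.tendsto_add_atTop_nat 1)
    apply squeeze_zero_norm _ hlim
    intro m
    rw [norm_div, Real.norm_eq_abs, hε_abs m, Real.norm_eq_abs,
      abs_of_nonneg (by positivity : (0:ℝ) ≤ (s:ℝ)^(m+1)), div_pow, one_pow]
  have hy_tendsto : Filter.Tendsto y Filter.atTop (nhds x) := by
    have := h0.const_add x
    simpa [hy_def] using this
  have hy' : Filter.Tendsto y Filter.atTop (nhdsWithin x {x}ᶜ) := by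
    rw [tendsto_nhdsWithin_iff]
    exact ⟨hy_tendsto, Filter.Eventually.of_forall (fun m => hne m)⟩
  have hT := hD.comp hy'
  have hT' : Filter.Tendsto (fun m => ((-1:ℝ))^(m+1)) Filter.atTop (nhds (deriv g x)) := by
    have heq : (slope g x ∘ y) = fun m => ((-1:ℝ))^(m+1) := by
      funext m; simp [Function.comp, hslope_eq m]
    rwa [heq] at hT
  have hL1 : deriv g x = 1 := by
    have hsub : Filter.Tendsto (fun k : ℕ => 2*k+1) Filter.atTop Filter.atTop :=
      Filter.tendsto_atTop_mono (fun k => by simp only [id_eq]; omega) Filter.tendsto_id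
    have h2 := hT'.comp hsub
    have h3 : ((fun m => ((-1:ℝ))^(m+1)) ∘ fun k : ℕ => 2*k+1) = fun _ => (1:ℝ) := by
      funext k
      simp only [Function.comp]
      exact Even.neg_one_pow ⟨k+1, by ring⟩
    rw [h3] at h2
    exact tendsto_nhds_unique h2 tendsto_const_nhds
  have hL2 : deriv g x = -1 := by
    have hsub : Filter.Tendsto (fun k : ℕ => 2*k) Filter.atTop Filter.atTop :=
      Filter.tendsto_atTop_mono (fun k => by simp only [id_eq]; omega) Filter.tendsto_id
    have h2 := hT'.comp hsub
    have h3 : ((fun m => ((-1:ℝ))^(m+1)) ∘ fun k : ℕ => 2*k) = fun _ => (-1:ℝ) := by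
      funext k
      simp only [Function.comp]
      exact Odd.neg_one_pow ⟨k, by ring⟩
    rw [h3] at h2
    exact tendsto_nhds_unique h2 tendsto_const_nhds
  rw [hL1] at hL2
  norm_num at hL2
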